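/- arXiv:2602.04019 — 2 statements merged into one kernel-verified Lean document; each statement's English description precedes it below -/
import Mathlib

section
/- With notation as in the Schur complement setting: let w_ℓ = H_ℓℓ^{-1/2} g̃_ℓ, B_ℓ = H_ℓℓ^{-1/2} H_ℓR H_RR^{-1/2}, and κ_ℓ = ‖B_ℓ‖₂² < 1. Then ½‖w_ℓ‖₂² ≤ Q^{(-ℓ)} - Q* ≤ (1/(2(1-κ_ℓ))) ‖w_ℓ‖₂². -/
open Matrix MeasureTheory BigOperators
noncomputable section

/-- Euclidean (spectral / operator) norm of a real square matrix. -/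
def opN {n : Type*} [Fintype n] [DecidableEq n] (A : Matrix n n ℝ) : ℝ :=
  ‖Matrix.toEuclideanCLM (𝕜 := ℝ) A‖

/-- Euclidean norm of a vector. -/
def vN {n : Type*} [Fintype n] (v : n → ℝ) : ℝ := Real.sqrt (∑ i, v i ^ 2)

/-- Operator norm of a rectangular real matrix. -/
def opNR {m n : Type*} [Fintype m] [Fintype n] [DecidableEq n] (A : Matrix m n ℝ) : ℝ :=
  ‖LinearMap.toContinuousLinearMap (Matrix.toEuclideanLin A)‖

/-- Square root of a positive semidefinite matrix (the former `Matrix.PosSemidef.sqrt`). -/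
def psdSqrt {n : Type*} [Fintype n] [DecidableEq n] {A : Matrix n n ℝ} (hA : A.PosSemidef) :
    Matrix n n ℝ :=
  (hA.1.eigenvectorUnitary : Matrix n n ℝ) * diagonal ((↑) ∘ (√·) ∘ hA.1.eigenvalues) *
    (star hA.1.eigenvectorUnitary : Matrix n n ℝ)

namespace Sandwich

lemma psdSqrt_mul_self {n : Type*} [Fintype n] [DecidableEq n] {A : Matrix n n ℝ}
    (hA : A.PosSemidef) : psdSqrt hA * psdSqrt hA = A := by
  have hU : (star hA.1.eigenvectorUnitary : Matrix n n ℝ) * (hA.1.eigenvectorUnitary : Matrix n n ℝ)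
      = 1 := Unitary.coe_star_mul_self _
  have hd : diagonal ((↑) ∘ (√·) ∘ hA.1.eigenvalues) * diagonal ((↑) ∘ (√·) ∘ hA.1.eigenvalues)
      = diagonal ((RCLike.ofReal : ℝ → ℝ) ∘ hA.1.eigenvalues) := by
    rw [diagonal_mul_diagonal]
    congr 1
    ext i
    simp [Real.mul_self_sqrt (hA.eigenvalues_nonneg i)]
  conv_rhs => rw [hA.1.spectral_theorem, Unitary.conjStarAlgAut_apply]
  unfold psdSqrt
  simp only [Matrix.mul_assoc]
  rw [← Matrix.mul_assoc (star _ : Matrix n n ℝ) (_ : Matrix n n ℝ), hU, Matrix.one_mul,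
    ← Matrix.mul_assoc (diagonal _) (diagonal _), hd]

lemma psdSqrt_transpose {n : Type*} [Fintype n] [DecidableEq n] {A : Matrix n n ℝ}
    (hA : A.PosSemidef) : (psdSqrt hA)ᵀ = psdSqrt hA := by
  unfold psdSqrt
  rw [Matrix.transpose_mul, Matrix.transpose_mul, diagonal_transpose,
    star_eq_conjTranspose, conjTranspose_eq_transpose_of_trivial, transpose_transpose,
    Matrix.mul_assoc]

lemma dot_self_nonneg {n : Type*} [Fintype n] (v : n → ℝ) : 0 ≤ v ⬝ᵥ v :=
  Finset.sum_nonneg fun i _ => mul_self_nonneg _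

lemma vN_sq {n : Type*} [Fintype n] (v : n → ℝ) : vN v ^ 2 = v ⬝ᵥ v := by
  rw [vN, Real.sq_sqrt (Finset.sum_nonneg fun i _ => sq_nonneg _)]
  simp [dotProduct, sq]

lemma dot_cs {n : Type*} [Fintype n] (x y : n → ℝ) :
    x ⬝ᵥ y ≤ Real.sqrt (x ⬝ᵥ x) * Real.sqrt (y ⬝ᵥ y) := by
  have h := Finset.sum_mul_sq_le_sq_mul_sq Finset.univ x y
  have hx : ∑ i, x i ^ 2 = x ⬝ᵥ x := by simp [dotProduct, sq]
  have hy : ∑ i, y i ^ 2 = y ⬝ᵥ y := by simp [dotProduct, sq]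
  rw [hx, hy] at h
  calc x ⬝ᵥ y ≤ |x ⬝ᵥ y| := le_abs_self _
    _ = Real.sqrt ((x ⬝ᵥ y) ^ 2) := (Real.sqrt_sq_eq_abs _).symm
    _ ≤ Real.sqrt ((x ⬝ᵥ x) * (y ⬝ᵥ y)) := Real.sqrt_le_sqrt h
    _ = _ := Real.sqrt_mul (dot_self_nonneg x) _

lemma dot_symm {n : Type*} [Fintype n] {H : Matrix n n ℝ} (hs : Hᵀ = H) (x y : n → ℝ) :
    x ⬝ᵥ H *ᵥ y = y ⬝ᵥ H *ᵥ x := by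
  rw [dotProduct_comm, dotProduct_mulVec, ← mulVec_transpose, hs]

lemma herm_transpose {n : Type*} [Fintype n] {H : Matrix n n ℝ} (h : H.IsHermitian) : Hᵀ = H := by
  rw [← Matrix.conjTranspose_eq_transpose_of_trivial]; exact h

lemma psd_dot_nonneg {n : Type*} [Fintype n] {M : Matrix n n ℝ} (hM : M.PosSemidef)
    (x : n → ℝ) : 0 ≤ x ⬝ᵥ M *ᵥ x := by simpa using hM.dotProduct_mulVec_nonneg x

lemma pd_dot_pos {n : Type*} [Fintype n] {M : Matrix n n ℝ} (hM : M.PosDef)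
    {x : n → ℝ} (hx : x ≠ 0) : 0 < x ⬝ᵥ M *ᵥ x := by simpa using hM.dotProduct_mulVec_pos hx

lemma psd_cs {n : Type*} [Fintype n] [DecidableEq n] {M : Matrix n n ℝ} (hM : M.PosSemidef)
    (x y : n → ℝ) :
    (x ⬝ᵥ M *ᵥ y) ^ 2 ≤ (x ⬝ᵥ M *ᵥ x) * (y ⬝ᵥ M *ᵥ y) := by
  set S := psdSqrt hM with hSdef
  have hS2 : S * S = M := psdSqrt_mul_self hM
  have hSs : Sᵀ = S := psdSqrt_transpose hM
  have key : ∀ a b : n → ℝ, a ⬝ᵥ M *ᵥ b = (S *ᵥ a) ⬝ᵥ (S *ᵥ b) := by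
    intro a b
    rw [← hS2, ← Matrix.mulVec_mulVec, dotProduct_mulVec, ← Matrix.mulVec_transpose, hSs]
  rw [key x y, key x x, key y y]
  have h := Finset.sum_mul_sq_le_sq_mul_sq Finset.univ (S *ᵥ x) (S *ᵥ y)
  have e : ∀ v : n → ℝ, ∑ i, v i ^ 2 = v ⬝ᵥ v := by intro v; simp [dotProduct, sq]
  rw [e, e] at h
  simpa [dotProduct, sq] using h

lemma mulVec_norm_le {m n : Type*} [Fintype m] [Fintype n] [DecidableEq n]
    (A : Matrix m n ℝ) (v : n → ℝ) :
    Real.sqrt ((A *ᵥ v) ⬝ᵥ (A *ᵥ v)) ≤ opNR A * Real.sqrt (v ⬝ᵥ v) := by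
  have h := (LinearMap.toContinuousLinearMap (Matrix.toEuclideanLin A)).le_opNorm
    ((WithLp.equiv 2 (n → ℝ)).symm v)
  have happ : (LinearMap.toContinuousLinearMap (Matrix.toEuclideanLin A))
      ((WithLp.equiv 2 (n → ℝ)).symm v) = (WithLp.equiv 2 (m → ℝ)).symm (A *ᵥ v) := by
    simp [Matrix.toEuclideanLin_apply]
  rw [happ] at h
  have e1 : ‖(WithLp.equiv 2 (m → ℝ)).symm (A *ᵥ v)‖ = Real.sqrt ((A *ᵥ v) ⬝ᵥ (A *ᵥ v)) := by
    rw [EuclideanSpace.norm_eq]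
    congr 1
    simp [dotProduct, sq, Real.norm_eq_abs, ← sq_abs]
  have e2 : ‖(WithLp.equiv 2 (n → ℝ)).symm v‖ = Real.sqrt (v ⬝ᵥ v) := by
    rw [EuclideanSpace.norm_eq]
    congr 1
    simp [dotProduct, sq, Real.norm_eq_abs, ← sq_abs]
  rw [e1, e2] at h
  exact h

lemma quad_min {n : Type*} [Fintype n] [DecidableEq n]
    (H : Matrix n n ℝ) (hH : H.PosDef) (g : n → ℝ) (Q0 : ℝ) (Q : (n → ℝ) → ℝ)
    (hQ : ∀ θ, Q θ = Q0 + g ⬝ᵥ θ + (1/2) * (θ ⬝ᵥ H *ᵥ θ))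
    (Qs : ℝ) (h : IsLeast (Set.range Q) Qs) :
    Qs = Q0 - (1/2) * (g ⬝ᵥ H⁻¹ *ᵥ g) := by
  have hdet : IsUnit H.det := (Matrix.isUnit_iff_isUnit_det _).1 hH.isUnit
  have hsym : Hᵀ = H := herm_transpose hH.isHermitian
  set θs : n → ℝ := -(H⁻¹ *ᵥ g) with hθs
  have hHθs : H *ᵥ θs = -g := by
    rw [hθs, Matrix.mulVec_neg, Matrix.mulVec_mulVec, Matrix.mul_nonsing_inv _ hdet,
      Matrix.one_mulVec]
  have key : ∀ θ, Q θ = Q θs + (1/2) * ((θ - θs) ⬝ᵥ H *ᵥ (θ - θs)) := by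
    intro θ
    rw [hQ, hQ]
    have h1 : (θ - θs) ⬝ᵥ H *ᵥ (θ - θs)
        = θ ⬝ᵥ H *ᵥ θ - 2 * (θ ⬝ᵥ H *ᵥ θs) + θs ⬝ᵥ H *ᵥ θs := by
      rw [Matrix.mulVec_sub, dotProduct_sub,
        sub_dotProduct, sub_dotProduct, dot_symm hsym θs θ]
      ring
    have h2 : θ ⬝ᵥ H *ᵥ θs = -(g ⬝ᵥ θ) := by
      rw [hHθs, dotProduct_neg, dotProduct_comm]
    have h3 : θs ⬝ᵥ H *ᵥ θs = g ⬝ᵥ H⁻¹ *ᵥ g := by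
      rw [hHθs, dotProduct_neg, hθs, neg_dotProduct, neg_neg,
        dotProduct_comm]
    have h4 : g ⬝ᵥ θs = -(g ⬝ᵥ H⁻¹ *ᵥ g) := by
      rw [hθs, dotProduct_neg]
    rw [h1, h2, h3, h4]
    ring
  have hQθs : Q θs = Q0 - (1/2) * (g ⬝ᵥ H⁻¹ *ᵥ g) := by
    rw [hQ]
    have h3 : θs ⬝ᵥ H *ᵥ θs = g ⬝ᵥ H⁻¹ *ᵥ g := by
      rw [hHθs, dotProduct_neg, hθs, neg_dotProduct, neg_neg,
        dotProduct_comm]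
    have h4 : g ⬝ᵥ θs = -(g ⬝ᵥ H⁻¹ *ᵥ g) := by
      rw [hθs, dotProduct_neg]
    rw [h3, h4]
    ring
  have hle : Qs ≤ Q θs := h.2 ⟨θs, rfl⟩
  obtain ⟨θ0, hθ0⟩ := h.1
  have hge : Q θs ≤ Qs := by
    rw [← hθ0, key θ0]
    have := psd_dot_nonneg hH.posSemidef (θ0 - θs)
    linarith
  have : Qs = Q θs := le_antisymm hle hge
  rw [this, hQθs]

end Sandwich
set_option maxHeartbeats 2000000 in
/-- sandwich bound
`½‖w‖² ≤ Q^{(-ℓ)} - Q* ≤ ‖w‖²/(2(1-κ))` with `w = Hll^{-1/2} g̃`,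
`κ = ‖Hll^{-1/2} HlR HRR^{-1/2}‖₂²`. -/
theorem freezing_penalty_sandwich
    {l r : Type*} [Fintype l] [DecidableEq l] [Fintype r] [DecidableEq r]
    (Hll : Matrix l l ℝ) (HlR : Matrix l r ℝ) (HRl : Matrix r l ℝ) (HRR : Matrix r r ℝ)
    (hH : (Matrix.fromBlocks Hll HlR HRl HRR).PosDef)
    (hll : Hll.PosDef) (hRR : HRR.PosDef)
    (gl : l → ℝ) (gR : r → ℝ) (Q0 : ℝ)
    (Q : (l ⊕ r → ℝ) → ℝ)
    (hQ : ∀ θ, Q θ = Q0 + (Sum.elim gl gR) ⬝ᵥ θ +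
      (1/2) * (θ ⬝ᵥ ((Matrix.fromBlocks Hll HlR HRl HRR) *ᵥ θ)))
    (gt : l → ℝ) (hgt : gt = gl - HlR *ᵥ (HRR⁻¹ *ᵥ gR))
    (w : l → ℝ) (hw : w = (psdSqrt hll.posSemidef)⁻¹ *ᵥ gt)
    (B : Matrix l r ℝ) (hB : B = (psdSqrt hll.posSemidef)⁻¹ * HlR * (psdSqrt hRR.posSemidef)⁻¹)
    (κ : ℝ) (hκ : κ = opNR B ^ 2)
    (hκ1 : κ < 1)
    (Qstar Qminus : ℝ)
    (hstar : IsLeast (Set.range Q) Qstar)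
    (hminus : IsLeast (Set.range fun θR : r → ℝ => Q (Sum.elim 0 θR)) Qminus) :
    (1/2) * vN w ^ 2 ≤ Qminus - Qstar ∧
    Qminus - Qstar ≤ (1 / (2 * (1 - κ))) * vN w ^ 2 := by
  classical
  open Sandwich in
  set sA := psdSqrt hll.posSemidef with hsAdef
  set sD := psdSqrt hRR.posSemidef with hsDdef
  have hsA2 : sA * sA = Hll := Sandwich.psdSqrt_mul_self hll.posSemidef
  have hsD2 : sD * sD = HRR := Sandwich.psdSqrt_mul_self hRR.posSemidef
  have hsAs : sAᵀ = sA := Sandwich.psdSqrt_transpose hll.posSemidef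
  have hsDs : sDᵀ = sD := Sandwich.psdSqrt_transpose hRR.posSemidef
  have hsAdet : IsUnit sA.det := by
    have h2 : sA.det * sA.det = Hll.det := by rw [← Matrix.det_mul, hsA2]
    have h3 := hll.det_pos
    refine isUnit_iff_ne_zero.2 fun h => ?_
    rw [h, mul_zero] at h2
    linarith [h2 ▸ h3]
  have hsDdet : IsUnit sD.det := by
    have h2 : sD.det * sD.det = HRR.det := by rw [← Matrix.det_mul, hsD2]
    have h3 := hRR.det_pos
    refine isUnit_iff_ne_zero.2 fun h => ?_
    rw [h, mul_zero] at h2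
    linarith [h2 ▸ h3]
  have hDdet : IsUnit HRR.det := (Matrix.isUnit_iff_isUnit_det _).1 hRR.isUnit
  have hHdet : IsUnit (Matrix.fromBlocks Hll HlR HRl HRR).det :=
    (Matrix.isUnit_iff_isUnit_det _).1 hH.isUnit
  have hC : HlRᵀ = HRl := by
    have h1 := Sandwich.herm_transpose hH.isHermitian
    rw [Matrix.fromBlocks_transpose] at h1
    have h2 := congrArg Matrix.toBlocks₂₁ h1
    simpa using h2
  have hC2 : HRlᵀ = HlR := by rw [← hC, Matrix.transpose_transpose]
  have hsAinvs : (sA⁻¹)ᵀ = sA⁻¹ := by rw [Matrix.transpose_nonsing_inv, hsAs]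
  have hsDinvs : (sD⁻¹)ᵀ = sD⁻¹ := by rw [Matrix.transpose_nonsing_inv, hsDs]
  have hDinvs : (HRR⁻¹)ᵀ = HRR⁻¹ := by
    rw [Matrix.transpose_nonsing_inv, Sandwich.herm_transpose hRR.isHermitian]
  have hsAmulinv : sA * sA⁻¹ = 1 := Matrix.mul_nonsing_inv _ hsAdet
  have hκ0 : 0 ≤ κ := by rw [hκ]; positivity
  have hBn : 0 ≤ opNR B := by unfold opNR; positivity
  have hBnc : Real.sqrt κ = opNR B := by rw [hκ, Real.sqrt_sq hBn]
  -- quadratic form bound for B * Bᵀ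
  have hBB : ∀ x : l → ℝ, x ⬝ᵥ (B * Bᵀ) *ᵥ x ≤ κ * (x ⬝ᵥ x) := by
    intro x
    set y := Bᵀ *ᵥ x with hy
    have h1 : x ⬝ᵥ (B * Bᵀ) *ᵥ x = y ⬝ᵥ y := by
      rw [← Matrix.mulVec_mulVec, Matrix.dotProduct_mulVec, ← Matrix.mulVec_transpose, ← hy]
    have h2 : x ⬝ᵥ (B *ᵥ y) = y ⬝ᵥ y := by
      rw [Matrix.dotProduct_mulVec, ← Matrix.mulVec_transpose, ← hy]
    have h3 := Sandwich.dot_cs x (B *ᵥ y)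
    have h4 := Sandwich.mulVec_norm_le B y
    set a := Real.sqrt (y ⬝ᵥ y) with ha
    set b := Real.sqrt (x ⬝ᵥ x) with hb
    have ha0 : 0 ≤ a := Real.sqrt_nonneg _
    have hb0 : 0 ≤ b := Real.sqrt_nonneg _
    have ha2 : a ^ 2 = y ⬝ᵥ y := Real.sq_sqrt (Sandwich.dot_self_nonneg y)
    have hb2 : b ^ 2 = x ⬝ᵥ x := Real.sq_sqrt (Sandwich.dot_self_nonneg x)
    have hc : 0 ≤ Real.sqrt ((B *ᵥ y) ⬝ᵥ (B *ᵥ y)) := Real.sqrt_nonneg _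
    have hkey : y ⬝ᵥ y ≤ b * (opNR B * a) := by
      calc y ⬝ᵥ y = x ⬝ᵥ (B *ᵥ y) := h2.symm
        _ ≤ b * Real.sqrt ((B *ᵥ y) ⬝ᵥ (B *ᵥ y)) := h3
        _ ≤ b * (opNR B * a) := by exact mul_le_mul_of_nonneg_left h4 hb0
    rw [h1]
    rw [← hBnc] at hkey
    have hck : (Real.sqrt κ) ^ 2 = κ := Real.sq_sqrt hκ0
    nlinarith [sq_nonneg (a - Real.sqrt κ * b), Real.sqrt_nonneg κ]
  set M : Matrix l l ℝ := 1 - B * Bᵀ with hM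
  have hMsym : Mᵀ = M := by
    rw [hM, Matrix.transpose_sub, Matrix.transpose_one, Matrix.transpose_mul,
      Matrix.transpose_transpose]
  have hBBpsd : (B * Bᵀ).PosSemidef := by
    have := Matrix.posSemidef_self_mul_conjTranspose B
    rwa [Matrix.conjTranspose_eq_transpose_of_trivial] at this
  have hMexp : ∀ x : l → ℝ, x ⬝ᵥ M *ᵥ x = x ⬝ᵥ x - x ⬝ᵥ (B * Bᵀ) *ᵥ x := by
    intro x
    rw [hM, Matrix.sub_mulVec, dotProduct_sub, Matrix.one_mulVec]
  have hMlow : ∀ x : l → ℝ, (1 - κ) * (x ⬝ᵥ x) ≤ x ⬝ᵥ M *ᵥ x := by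
    intro x
    have := hBB x
    rw [hMexp x]
    nlinarith
  have hMup : ∀ x : l → ℝ, x ⬝ᵥ M *ᵥ x ≤ x ⬝ᵥ x := by
    intro x
    have := Sandwich.psd_dot_nonneg hBBpsd x
    rw [hMexp x]
    linarith
  have hMpd : M.PosDef := by
    refine Matrix.PosDef.of_dotProduct_mulVec_pos ?_ ?_
    · show Mᴴ = M
      rw [Matrix.conjTranspose_eq_transpose_of_trivial, hMsym]
    · intro x hx
      have hd : 0 < x ⬝ᵥ x :=
        lt_of_le_of_ne (Sandwich.dot_self_nonneg x)
          (fun h => hx (dotProduct_self_eq_zero.mp h.symm))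
      have h0 : (0:ℝ) < (1 - κ) * (x ⬝ᵥ x) := mul_pos (by linarith) hd
      simpa using lt_of_lt_of_le h0 (hMlow x)
  have hMdet : IsUnit M.det := (Matrix.isUnit_iff_isUnit_det _).1 hMpd.isUnit
  -- Schur complement
  set S : Matrix l l ℝ := Hll - HlR * HRR⁻¹ * HRl with hSdef
  have hDinv2 : sD⁻¹ * sD⁻¹ = HRR⁻¹ := by rw [← Matrix.mul_inv_rev, hsD2]
  have hB1 : sA * B = HlR * sD⁻¹ := by
    rw [hB, ← Matrix.mul_assoc, ← Matrix.mul_assoc, hsAmulinv, Matrix.one_mul]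
  have hB2 : Bᵀ * sA = sD⁻¹ * HRl := by
    rw [hB, Matrix.transpose_mul, Matrix.transpose_mul, hsAinvs, hsDinvs, hC,
      Matrix.mul_assoc, Matrix.mul_assoc, Matrix.nonsing_inv_mul _ hsAdet, Matrix.mul_one]
  have hSfact : S = sA * M * sA := by
    rw [hM, Matrix.mul_sub, Matrix.sub_mul, Matrix.mul_one, hsA2]
    rw [hSdef]
    congr 1
    calc HlR * HRR⁻¹ * HRl = HlR * sD⁻¹ * (sD⁻¹ * HRl) := by
          rw [Matrix.mul_assoc, Matrix.mul_assoc, ← Matrix.mul_assoc sD⁻¹, hDinv2]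
      _ = sA * B * (Bᵀ * sA) := by rw [hB1, hB2]
      _ = sA * (B * Bᵀ) * sA := by
          rw [Matrix.mul_assoc, Matrix.mul_assoc, Matrix.mul_assoc]
  have hsAunit : IsUnit sA := (Matrix.isUnit_iff_isUnit_det _).2 hsAdet
  have hSpd : S.PosDef := by
    rw [hSfact]
    refine Matrix.PosDef.of_dotProduct_mulVec_pos ?_ ?_
    · show (sA * M * sA)ᴴ = sA * M * sA
      rw [Matrix.conjTranspose_eq_transpose_of_trivial, Matrix.transpose_mul,
        Matrix.transpose_mul, hsAs, hMsym, Matrix.mul_assoc]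
    · intro x hx
      have hxA : sA *ᵥ x ≠ 0 := by
        intro h
        apply hx
        have hinj := Matrix.mulVec_injective_iff_isUnit.2 hsAunit
        apply hinj
        rw [h, Matrix.mulVec_zero]
      have h1 : star x ⬝ᵥ (sA * M * sA) *ᵥ x = (sA *ᵥ x) ⬝ᵥ M *ᵥ (sA *ᵥ x) := by
        simp only [star_trivial]
        rw [← Matrix.mulVec_mulVec, ← Matrix.mulVec_mulVec, Matrix.dotProduct_mulVec,
          ← Matrix.mulVec_transpose, hsAs]
      rw [h1]
      exact Sandwich.pd_dot_pos hMpd hxA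
  have hSdet : IsUnit S.det := (Matrix.isUnit_iff_isUnit_det _).1 hSpd.isUnit
  -- block solve
  set u := S⁻¹ *ᵥ gt with hu
  set v := HRR⁻¹ *ᵥ (gR - HRl *ᵥ u) with hv
  have hSu : S *ᵥ u = gt := by
    rw [hu, Matrix.mulVec_mulVec, Matrix.mul_nonsing_inv _ hSdet, Matrix.one_mulVec]
  have hDv : HRR *ᵥ v = gR - HRl *ᵥ u := by
    rw [hv, Matrix.mulVec_mulVec, Matrix.mul_nonsing_inv _ hDdet, Matrix.one_mulVec]
  have hsolve : (Matrix.fromBlocks Hll HlR HRl HRR) *ᵥ (Sum.elim u v) = Sum.elim gl gR := by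
    have hvexp : HlR *ᵥ v = HlR *ᵥ (HRR⁻¹ *ᵥ gR) - HlR *ᵥ (HRR⁻¹ *ᵥ (HRl *ᵥ u)) := by
      rw [hv, Matrix.mulVec_sub, Matrix.mulVec_sub]
    have hSu' : Hll *ᵥ u - HlR *ᵥ (HRR⁻¹ *ᵥ (HRl *ᵥ u)) = gt := by
      rw [← hSu, hSdef, Matrix.sub_mulVec]
      rw [Matrix.mul_assoc, ← Matrix.mulVec_mulVec, ← Matrix.mulVec_mulVec]
    have e1 : Hll *ᵥ u + HlR *ᵥ v = gl := by
      rw [hvexp]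
      have hre : Hll *ᵥ u + (HlR *ᵥ (HRR⁻¹ *ᵥ gR) - HlR *ᵥ (HRR⁻¹ *ᵥ (HRl *ᵥ u)))
          = (Hll *ᵥ u - HlR *ᵥ (HRR⁻¹ *ᵥ (HRl *ᵥ u))) + HlR *ᵥ (HRR⁻¹ *ᵥ gR) := by abel
      rw [hre, hSu', hgt]
      abel
    have e2 : HRl *ᵥ u + HRR *ᵥ v = gR := by
      rw [hDv]
      abel
    rw [Matrix.fromBlocks_mulVec]
    simp only [Sum.elim_comp_inl, Sum.elim_comp_inr]
    rw [e1, e2]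
  have hHinvg : (Matrix.fromBlocks Hll HlR HRl HRR)⁻¹ *ᵥ (Sum.elim gl gR) = Sum.elim u v := by
    rw [← hsolve, Matrix.mulVec_mulVec, Matrix.nonsing_inv_mul _ hHdet, Matrix.one_mulVec]
  have hQstar : Qstar = Q0 - (1/2) * (gl ⬝ᵥ u + gR ⬝ᵥ v) := by
    have h := Sandwich.quad_min _ hH (Sum.elim gl gR) Q0 Q hQ Qstar hstar
    rw [h, hHinvg, sumElim_dotProduct_sumElim]
  have hQminus : Qminus = Q0 - (1/2) * (gR ⬝ᵥ HRR⁻¹ *ᵥ gR) := by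
    apply Sandwich.quad_min HRR hRR gR Q0 _ _ Qminus hminus
    intro θR
    rw [hQ, Matrix.fromBlocks_mulVec, sumElim_dotProduct_sumElim,
      sumElim_dotProduct_sumElim]
    simp [Matrix.mulVec_zero]
  -- difference
  have h5 : gR ⬝ᵥ v = gR ⬝ᵥ HRR⁻¹ *ᵥ gR - (HlR *ᵥ (HRR⁻¹ *ᵥ gR)) ⬝ᵥ u := by
    rw [hv, Matrix.mulVec_sub, dotProduct_sub]
    congr 1
    rw [Matrix.dotProduct_mulVec gR, ← Matrix.mulVec_transpose, hDinvs,
      Matrix.dotProduct_mulVec, ← Matrix.mulVec_transpose, hC2]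
  have h6 : gl ⬝ᵥ u = gt ⬝ᵥ u + (HlR *ᵥ (HRR⁻¹ *ᵥ gR)) ⬝ᵥ u := by
    rw [hgt, sub_dotProduct]
    ring
  have hdiff : Qminus - Qstar = (1/2) * (gt ⬝ᵥ u) := by
    rw [hQstar, hQminus, h5, h6]
    ring
  -- change of variables to w
  have hSinv : S⁻¹ = sA⁻¹ * (M⁻¹ * sA⁻¹) := by
    rw [hSfact, Matrix.mul_inv_rev, Matrix.mul_inv_rev]
  have hgtu : gt ⬝ᵥ u = w ⬝ᵥ M⁻¹ *ᵥ w := by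
    rw [hu, hSinv, ← Matrix.mulVec_mulVec, ← Matrix.mulVec_mulVec,
      Matrix.dotProduct_mulVec gt, ← Matrix.mulVec_transpose, hsAinvs, ← hw]
  -- bounds
  set w' := M⁻¹ *ᵥ w with hw'
  have hMw' : M *ᵥ w' = w := by
    rw [hw', Matrix.mulVec_mulVec, Matrix.mul_nonsing_inv _ hMdet, Matrix.one_mulVec]
  have htw : w ⬝ᵥ M⁻¹ *ᵥ w = w' ⬝ᵥ M *ᵥ w' := by
    rw [← hw', dotProduct_comm, ← hMw']
  have hlow : w ⬝ᵥ w ≤ w' ⬝ᵥ M *ᵥ w' := by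
    have hcs := Sandwich.psd_cs hMpd.posSemidef w w'
    rw [hMw'] at hcs
    have hup := hMup w
    have h0 := Sandwich.psd_dot_nonneg hMpd.posSemidef w
    have h1 := Sandwich.psd_dot_nonneg hMpd.posSemidef w'
    have heq : w' ⬝ᵥ w = w' ⬝ᵥ M *ᵥ w' := by rw [hMw']
    have hnn : 0 ≤ w' ⬝ᵥ w := heq ▸ h1
    rcases eq_or_lt_of_le (Sandwich.dot_self_nonneg w) with h | h
    · linarith
    · nlinarith [mul_le_mul_of_nonneg_right hup hnn]
  have hup2 : (1 - κ) * (w' ⬝ᵥ M *ᵥ w') ≤ w ⬝ᵥ w := by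
    set a := Real.sqrt (w' ⬝ᵥ w') with ha
    set b := Real.sqrt (w ⬝ᵥ w) with hb
    have ha0 : 0 ≤ a := Real.sqrt_nonneg _
    have hb0 : 0 ≤ b := Real.sqrt_nonneg _
    have ha2 : a ^ 2 = w' ⬝ᵥ w' := Real.sq_sqrt (Sandwich.dot_self_nonneg w')
    have hb2 : b ^ 2 = w ⬝ᵥ w := Real.sq_sqrt (Sandwich.dot_self_nonneg w)
    have h1 := hMlow w'
    have h2 : w' ⬝ᵥ M *ᵥ w' ≤ a * b := by
      calc w' ⬝ᵥ M *ᵥ w' = w' ⬝ᵥ w := by rw [hMw']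
        _ ≤ a * b := Sandwich.dot_cs w' w
    have hk : (0:ℝ) ≤ 1 - κ := by linarith
    rcases eq_or_lt_of_le ha0 with h | h
    · have ht0 : w' ⬝ᵥ M *ᵥ w' ≤ 0 := by
        rw [← h] at h2
        simpa using h2
      nlinarith [Sandwich.dot_self_nonneg w, mul_nonneg hk (neg_nonneg.2 ht0)]
    · have key : (1 - κ) * a ≤ b := by
        have h3 := le_trans h1 h2
        rw [← ha2] at h3
        nlinarith [h3, h]
      calc (1 - κ) * (w' ⬝ᵥ M *ᵥ w') ≤ (1 - κ) * (a * b) := mul_le_mul_of_nonneg_left h2 hk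
        _ = ((1 - κ) * a) * b := by ring
        _ ≤ b * b := mul_le_mul_of_nonneg_right key hb0
        _ = b ^ 2 := by ring
        _ = w ⬝ᵥ w := hb2
  have hvN : vN w ^ 2 = w ⬝ᵥ w := Sandwich.vN_sq w
  have hk1 : (0:ℝ) < 1 - κ := by linarith
  constructor
  · rw [hdiff, hgtu, htw, hvN]
    linarith
  · rw [hdiff, hgtu, htw, hvN]
    rw [show (1:ℝ) / (2 * (1 - κ)) * (w ⬝ᵥ w) = (w ⬝ᵥ w) / (2 * (1 - κ)) by ring,
      le_div_iff₀ (by linarith : (0:ℝ) < 2 * (1 - κ))]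
    nlinarith [hup2]
end
end

section
/- With notation as above, write u_ℓ = H_ℓℓ^{-1/2} g_ℓ and C_ℓ = √κ_ℓ · ‖H_RR^{-1/2} g_R‖₂, and s_ℓ = max(‖u_ℓ‖₂ - C_ℓ, 0). Then Q^{(-ℓ)} - Q* ≥ ½ s_ℓ². -/
open Matrix MeasureTheory BigOperators
noncomputable section

/-- The positive semidefinite square root of a positive semidefinite matrix
(removed from Mathlib; restored with its former definition). -/
noncomputable def Matrix.PosSemidef.sqrt {n 𝕜 : Type*} [Fintype n] [DecidableEq n] [RCLike 𝕜]
    [PartialOrder 𝕜] [StarOrderedRing 𝕜]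
    {A : Matrix n n 𝕜} (hA : A.PosSemidef) : Matrix n n 𝕜 :=
  hA.isHermitian.eigenvectorUnitary.1 * diagonal ((↑) ∘ (√·) ∘ hA.isHermitian.eigenvalues) *
  (star hA.isHermitian.eigenvectorUnitary : Matrix n n 𝕜)

lemma Matrix.PosSemidef.sqrt_mul_self {n : Type*} [Fintype n] [DecidableEq n] {A : Matrix n n ℝ}
    (hA : A.PosSemidef) : hA.sqrt * hA.sqrt = A := by
  have hU : (star hA.isHermitian.eigenvectorUnitary : Matrix n n ℝ) *
      hA.isHermitian.eigenvectorUnitary.1 = 1 := Unitary.coe_star_mul_self _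
  conv_rhs => rw [hA.isHermitian.spectral_theorem, Unitary.conjStarAlgAut_apply]
  rw [Matrix.PosSemidef.sqrt]
  simp only [Matrix.mul_assoc]
  rw [← Matrix.mul_assoc (star _ : Matrix n n ℝ) _ _, hU, Matrix.one_mul, ← Matrix.mul_assoc
    (diagonal _) (diagonal _), diagonal_mul_diagonal]
  congr 3
  funext i
  simp [Real.mul_self_sqrt (hA.eigenvalues_nonneg i)]

lemma Matrix.PosSemidef.posSemidef_sqrt {n : Type*} [Fintype n] [DecidableEq n] {A : Matrix n n ℝ}
    (hA : A.PosSemidef) : PosSemidef hA.sqrt := by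
  rw [Matrix.PosSemidef.sqrt, star_eq_conjTranspose]
  apply PosSemidef.mul_mul_conjTranspose_same
  refine posSemidef_diagonal_iff.mpr fun i ↦ ?_
  simp

lemma vN_eq {n : Type*} [Fintype n] (v : n → ℝ) :
    vN v = ‖((WithLp.equiv 2 (n → ℝ)).symm v : EuclideanSpace ℝ n)‖ := by
  rw [EuclideanSpace.norm_eq, vN]
  congr 1
  refine Finset.sum_congr rfl fun i _ => ?_
  simp [Real.norm_eq_abs, sq_abs]

lemma vN_nonneg {n : Type*} [Fintype n] (v : n → ℝ) : 0 ≤ vN v := Real.sqrt_nonneg _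

lemma vN_sq {n : Type*} [Fintype n] (v : n → ℝ) : vN v ^ 2 = v ⬝ᵥ v := by
  rw [vN, Real.sq_sqrt (by positivity)]
  simp [dotProduct, sq]

lemma vN_add_le {n : Type*} [Fintype n] (v w : n → ℝ) : vN (v + w) ≤ vN v + vN w := by
  rw [vN_eq, vN_eq, vN_eq]
  exact le_trans (le_of_eq (by rfl)) (norm_add_le _ _)

lemma vN_mulVec_le {m n : Type*} [Fintype m] [Fintype n] [DecidableEq n]
    (A : Matrix m n ℝ) (v : n → ℝ) : vN (A *ᵥ v) ≤ opNR A * vN v := by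
  have h := (LinearMap.toContinuousLinearMap (Matrix.toEuclideanLin A)).le_opNorm
    ((WithLp.equiv 2 (n → ℝ)).symm v)
  rw [vN_eq, vN_eq]
  simpa [opNR] using h

lemma dmv {m n : Type*} [Fintype m] [Fintype n] (A : Matrix m n ℝ) (x : m → ℝ) (y : n → ℝ) :
    x ⬝ᵥ (A *ᵥ y) = (Aᵀ *ᵥ x) ⬝ᵥ y := by
  rw [Matrix.mulVec_transpose, ← Matrix.dotProduct_mulVec]

/-- with `u = Hll^{-1/2}g_ℓ`, `C = √κ‖HRR^{-1/2}g_R‖₂`,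
`s = (‖u‖₂ - C)₊`, the freezing penalty satisfies `Q^{(-ℓ)} - Q* ≥ ½s²`. -/
theorem freezing_penalty_lower_bound
    {l r : Type*} [Fintype l] [DecidableEq l] [Fintype r] [DecidableEq r]
    (Hll : Matrix l l ℝ) (HlR : Matrix l r ℝ) (HRl : Matrix r l ℝ) (HRR : Matrix r r ℝ)
    (hH : (Matrix.fromBlocks Hll HlR HRl HRR).PosDef)
    (hll : Hll.PosDef) (hRR : HRR.PosDef)
    (gl : l → ℝ) (gR : r → ℝ) (Q0 : ℝ)
    (Q : (l ⊕ r → ℝ) → ℝ)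
    (hQ : ∀ θ, Q θ = Q0 + (Sum.elim gl gR) ⬝ᵥ θ +
      (1/2) * (θ ⬝ᵥ ((Matrix.fromBlocks Hll HlR HRl HRR) *ᵥ θ)))
    (B : Matrix l r ℝ) (hB : B = (hll.posSemidef.sqrt)⁻¹ * HlR * (hRR.posSemidef.sqrt)⁻¹)
    (κ : ℝ) (hκ : κ = opNR B ^ 2) (hκ1 : κ < 1)
    (u : l → ℝ) (hu : u = (hll.posSemidef.sqrt)⁻¹ *ᵥ gl)
    (C s : ℝ) (hC : C = Real.sqrt κ * vN ((hRR.posSemidef.sqrt)⁻¹ *ᵥ gR))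
    (hs : s = max (vN u - C) 0)
    (Qstar Qminus : ℝ)
    (hstar : IsLeast (Set.range Q) Qstar)
    (hminus : IsLeast (Set.range fun θR : r → ℝ => Q (Sum.elim 0 θR)) Qminus) :
    Qminus - Qstar ≥ (1/2) * s ^ 2 := by
  classical
  set m1 := hll.posSemidef.sqrt with hm1
  set n1 := hRR.posSemidef.sqrt with hn1
  -- symmetry facts
  have hm1sq : m1 * m1 = Hll := hll.posSemidef.sqrt_mul_self
  have hn1sq : n1 * n1 = HRR := hRR.posSemidef.sqrt_mul_self
  have hm1T : m1ᵀ = m1 := by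
    have := hll.posSemidef.posSemidef_sqrt.isHermitian
    simpa [Matrix.IsHermitian, Matrix.conjTranspose_eq_transpose_of_trivial] using this
  have hllT : Hllᵀ = Hll := by
    simpa [Matrix.IsHermitian, Matrix.conjTranspose_eq_transpose_of_trivial] using hll.isHermitian
  have hRRT : HRRᵀ = HRR := by
    simpa [Matrix.IsHermitian, Matrix.conjTranspose_eq_transpose_of_trivial] using hRR.isHermitian
  have hRlT : HRl = HlRᵀ := by
    have h := hH.isHermitian
    rw [Matrix.IsHermitian, Matrix.conjTranspose_eq_transpose_of_trivial] at h
    have h' := congrArg Matrix.toBlocks₂₁ h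
    simp only [Matrix.fromBlocks_transpose, Matrix.toBlocks_fromBlocks₂₁] at h'
    exact h'.symm
  -- determinant facts
  have hlldet : IsUnit Hll.det := isUnit_iff_ne_zero.2 (ne_of_gt hll.det_pos)
  have hRRdet : IsUnit HRR.det := isUnit_iff_ne_zero.2 (ne_of_gt hRR.det_pos)
  have hm1det : IsUnit m1.det := by
    have : m1.det * m1.det = Hll.det := by rw [← Matrix.det_mul, hm1sq]
    refine isUnit_iff_ne_zero.2 fun h0 => ?_
    rw [h0, mul_zero] at this
    exact (ne_of_gt hll.det_pos) this.symm
  have hn1det : IsUnit n1.det := by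
    have : n1.det * n1.det = HRR.det := by rw [← Matrix.det_mul, hn1sq]
    refine isUnit_iff_ne_zero.2 fun h0 => ?_
    rw [h0, mul_zero] at this
    exact (ne_of_gt hRR.det_pos) this.symm
  have hllinv : Hll⁻¹ = m1⁻¹ * m1⁻¹ := by rw [← hm1sq, Matrix.mul_inv_rev]
  have hRRinv : HRR⁻¹ = n1⁻¹ * n1⁻¹ := by rw [← hn1sq, Matrix.mul_inv_rev]
  have hllinvT : Hll⁻¹ᵀ = Hll⁻¹ := by rw [Matrix.transpose_nonsing_inv, hllT]
  have hRRinvT : HRR⁻¹ᵀ = HRR⁻¹ := by rw [Matrix.transpose_nonsing_inv, hRRT]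
  have hm1invT : m1⁻¹ᵀ = m1⁻¹ := by rw [Matrix.transpose_nonsing_inv, hm1T]
  -- main vectors
  set d : l → ℝ := gl - HlR *ᵥ (HRR⁻¹ *ᵥ gR) with hd
  set a : l → ℝ := Hll⁻¹ *ᵥ d with ha
  set p : r → ℝ := HRl *ᵥ a with hp
  set z : r → ℝ := HRR⁻¹ *ᵥ p with hz
  set w : l → ℝ := m1⁻¹ *ᵥ d with hw
  set v : r → ℝ := n1⁻¹ *ᵥ gR with hv
  set α : ℝ := d ⬝ᵥ (Hll⁻¹ *ᵥ d) with hα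
  set β : ℝ := p ⬝ᵥ (HRR⁻¹ *ᵥ p) with hβ
  have hHlla : Hll *ᵥ a = d := by
    rw [ha, Matrix.mulVec_mulVec, Matrix.mul_nonsing_inv _ hlldet, Matrix.one_mulVec]
  have hHRRz : HRR *ᵥ z = p := by
    rw [hz, Matrix.mulVec_mulVec, Matrix.mul_nonsing_inv _ hRRdet, Matrix.one_mulVec]
  -- Step A : w = u - B *ᵥ v
  have hwu : w = u - B *ᵥ v := by
    rw [hu, hB, hw, hd, Matrix.mulVec_sub]
    congr 1
    rw [hv]
    simp only [Matrix.mulVec_mulVec]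
    rw [Matrix.mul_assoc, ← hRRinv, Matrix.mul_assoc]
  -- Step B : vN w ≥ s
  have hsqrtκ : Real.sqrt κ = opNR B := by
    have h0 : (0:ℝ) ≤ opNR B := norm_nonneg _
    rw [hκ, Real.sqrt_sq h0]
  have hvw : s ≤ vN w := by
    rcases le_total (vN u - C) 0 with h | h
    · rw [hs, max_eq_right h]; exact vN_nonneg w
    · rw [hs, max_eq_left h]
      have hu' : vN u ≤ vN w + C := by
        have : u = w + B *ᵥ v := by rw [hwu]; abel
        rw [this]
        refine le_trans (vN_add_le _ _) ?_
        have := vN_mulVec_le B v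
        rw [hC, hsqrtκ]
        linarith
      linarith
  have hs0 : 0 ≤ s := by rw [hs]; exact le_max_right _ _
  -- Step C : α = vN w ^ 2
  have hαw : α = vN w ^ 2 := by
    rw [vN_sq, hα, hllinv, ← Matrix.mulVec_mulVec, hw, dmv, hm1invT]
  -- β ≥ 0
  have hβ0 : 0 ≤ β := by
    have h2 : β = z ⬝ᵥ (HRR *ᵥ z) := by rw [hHRRz, hβ, dotProduct_comm]
    have := hRR.posSemidef.re_dotProduct_nonneg z
    simpa [h2] using this
  -- expansion of Q on block vectors
  have Qexp : ∀ (x : l → ℝ) (y : r → ℝ), Q (Sum.elim x y) =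
      Q0 + (gl ⬝ᵥ x + gR ⬝ᵥ y) + (1/2) * (x ⬝ᵥ (Hll *ᵥ x) + x ⬝ᵥ (HlR *ᵥ y)
        + y ⬝ᵥ (HRl *ᵥ x) + y ⬝ᵥ (HRR *ᵥ y)) := by
    intro x y
    rw [hQ, Matrix.fromBlocks_mulVec, sumElim_dotProduct_sumElim,
      sumElim_dotProduct_sumElim]
    simp [dotProduct_add]
    ring
  -- the witnesses
  obtain ⟨y₀, hy₀⟩ := hminus.1
  have hQstar : Qstar ≤ Q (Sum.elim (-a) (y₀ + z)) := hstar.2 ⟨_, rfl⟩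
  -- the key identity
  have h1 : y₀ ⬝ᵥ (HRl *ᵥ a) = a ⬝ᵥ (HlR *ᵥ y₀) := by
    rw [dmv HlR a y₀, ← hRlT, dotProduct_comm]
  have h2 : z ⬝ᵥ (HRl *ᵥ a) = a ⬝ᵥ (HlR *ᵥ z) := by
    rw [dmv HlR a z, ← hRlT, dotProduct_comm]
  have h3 : z ⬝ᵥ (HRR *ᵥ y₀) = y₀ ⬝ᵥ (HRR *ᵥ z) := by
    rw [dmv HRR y₀ z, hRRT, dotProduct_comm]
  have h4 : y₀ ⬝ᵥ (HRR *ᵥ z) = a ⬝ᵥ (HlR *ᵥ y₀) := by rw [hHRRz, hp, h1]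
  have h5 : a ⬝ᵥ (HlR *ᵥ z) = β := by
    rw [dmv HlR a z, ← hRlT, ← hp, hβ, hz]
  have h6 : z ⬝ᵥ (HRR *ᵥ z) = β := by rw [hHRRz, hβ, dotProduct_comm]
  have h7 : gl ⬝ᵥ a - gR ⬝ᵥ z = α := by
    have : gR ⬝ᵥ z = (HlR *ᵥ (HRR⁻¹ *ᵥ gR)) ⬝ᵥ a := by
      rw [hz, dmv HRR⁻¹ gR p, hRRinvT, hp, dmv HRl _ a, hRlT, Matrix.transpose_transpose]
    rw [this, hα, ← sub_dotProduct, ← hd, dotProduct_comm, ha]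
  have h8 : a ⬝ᵥ (Hll *ᵥ a) = α := by
    rw [hHlla, hα, ha, dotProduct_comm]
  have key : Q (Sum.elim 0 y₀) - Q (Sum.elim (-a) (y₀ + z)) = (1/2) * α + (1/2) * β := by
    rw [Qexp, Qexp]
    simp only [Matrix.mulVec_neg, Matrix.mulVec_add, Matrix.mulVec_zero,
      dotProduct_neg, neg_dotProduct, dotProduct_add, add_dotProduct,
      dotProduct_zero, zero_dotProduct]
    linarith [h1, h2, h3, h4, h5, h6, h7, h8]
  have hQm : Qminus = Q (Sum.elim 0 y₀) := hy₀.symm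
  have : Qminus - Qstar ≥ (1/2) * α := by
    rw [hQm]
    linarith [key, hQstar, hβ0]
  have hfin : (1/2) * s ^ 2 ≤ (1/2) * α := by
    rw [hαw]
    have : s ^ 2 ≤ vN w ^ 2 := by nlinarith [hvw, hs0]
    linarith
  linarith
end
end
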